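/- Let p be a prime and R a commutative ring in which (p-1)! is invertible, let I ⊆ R be an ideal contained in the Jacobson radical of R, and let k ≥ 1 be an integer. Then: (i) every element of 1 + I^k is a unit of R; (ii) for each j ≥ 1 the set U_j = {u ∈ R^× : u - 1 ∈ I^j} is a subgroup of the group of units R^×; and (iii) the map x ↦ exp_p(x) induces a group isomorphism from the additive quotient group I^k/I^{pk} onto the multiplicative quotient group U_k/U_{pk}. -/

import Mathlib

/-- The `p`-truncated exponential `exp_p(x) = ∑_{j=0}^{p-1} x^j / j!`. -/
noncomputable def truncExp (p : ℕ) {R : Type*} [CommRing R] (x : R) : R :=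
  ∑ j ∈ Finset.range p, Ring.inverse ((Nat.factorial j : R)) * x ^ j

section TruncExpHelpers

open Finset

variable {R : Type*} [CommRing R]

lemma fact_isUnit {p : ℕ} (hfac : IsUnit ((Nat.factorial (p - 1) : R))) {j : ℕ}
    (hj : j < p) : IsUnit ((Nat.factorial j : R)) := by
  have h : j.factorial ∣ (p-1).factorial := Nat.factorial_dvd_factorial (by omega)
  exact isUnit_of_dvd_unit (Nat.cast_dvd_cast h) hfac

lemma coeff_eq {p : ℕ} (hfac : IsUnit ((Nat.factorial (p - 1) : R))) {m n : ℕ}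
    (hmn : m ≤ n) (hn : n < p) :
    Ring.inverse ((n.factorial : R)) * (n.choose m : R)
      = Ring.inverse ((m.factorial : R)) * Ring.inverse (((n - m).factorial : R)) := by
  have hnu := fact_isUnit hfac hn
  have hmu := fact_isUnit hfac (lt_of_le_of_lt hmn hn)
  have hnmu := fact_isUnit hfac (lt_of_le_of_lt (Nat.sub_le n m) hn)
  have key : ((n.choose m : R)) * (m.factorial : R) * ((n - m).factorial : R) = (n.factorial : R) := by
    exact_mod_cast congrArg (Nat.cast : ℕ → R) (Nat.choose_mul_factorial_mul_factorial hmn)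
  have h1 : (n.factorial : R) * Ring.inverse ((n.factorial : R)) = 1 := Ring.mul_inverse_cancel _ hnu
  have h2 : (m.factorial : R) * Ring.inverse ((m.factorial : R)) = 1 := Ring.mul_inverse_cancel _ hmu
  have h3 : ((n-m).factorial : R) * Ring.inverse (((n-m).factorial : R)) = 1 := Ring.mul_inverse_cancel _ hnmu
  set a := (n.factorial : R); set b := (m.factorial : R); set c := ((n-m).factorial : R)
  set ia := Ring.inverse a; set ib := Ring.inverse b; set ic := Ring.inverse c
  set ch := (n.choose m : R)
  linear_combination (ia*ib*ic) * key + (ib*ic) * h1 - (ia*ch) * h2 - (ia*ch*b*ib) * h3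

lemma truncExp_mul_sub (p : ℕ) (hfac : IsUnit ((Nat.factorial (p - 1) : R))) (x y : R) :
    truncExp p x * truncExp p y - truncExp p (x + y) =
      ∑ ij ∈ (range p ×ˢ range p).filter (fun ij => p ≤ ij.1 + ij.2),
        Ring.inverse ((ij.1.factorial : R)) * Ring.inverse ((ij.2.factorial : R))
          * (x ^ ij.1 * y ^ ij.2) := by
  have hprod : truncExp p x * truncExp p y
      = ∑ ij ∈ range p ×ˢ range p,
          Ring.inverse ((ij.1.factorial : R)) * Ring.inverse ((ij.2.factorial : R))
            * (x ^ ij.1 * y ^ ij.2) := by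
    rw [truncExp, truncExp, Finset.sum_mul_sum, Finset.sum_product]
    exact Finset.sum_congr rfl fun i _ => Finset.sum_congr rfl fun j _ => by ring
  have hadd : truncExp p (x + y)
      = ∑ ij ∈ (range p ×ˢ range p).filter (fun ij => ij.1 + ij.2 < p),
          Ring.inverse ((ij.1.factorial : R)) * Ring.inverse ((ij.2.factorial : R))
            * (x ^ ij.1 * y ^ ij.2) := by
    rw [truncExp]
    have step : ∀ n ∈ range p, Ring.inverse ((n.factorial : R)) * (x + y) ^ n
        = ∑ m ∈ range (n + 1),
            Ring.inverse ((m.factorial : R)) * Ring.inverse (((n - m).factorial : R))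
              * (x ^ m * y ^ (n - m)) := by
      intro n hn
      rw [add_pow, Finset.mul_sum]
      refine Finset.sum_congr rfl fun m hm => ?_
      have hmn : m ≤ n := Nat.lt_succ_iff.mp (Finset.mem_range.mp hm)
      rw [← coeff_eq hfac hmn (Finset.mem_range.mp hn)]
      ring
    rw [Finset.sum_congr rfl step, Finset.sum_sigma']
    refine Finset.sum_nbij' (fun s => (s.2, s.1 - s.2)) (fun ij => ⟨ij.1 + ij.2, ij.1⟩)
      ?_ ?_ ?_ ?_ ?_
    · intro a ha
      simp only [mem_sigma, mem_range, mem_filter, mem_product] at ha ⊢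
      omega
    · intro b hb
      simp only [mem_sigma, mem_range, mem_filter, mem_product] at hb ⊢
      omega
    · intro a ha
      simp only [mem_sigma, mem_range] at ha
      ext <;> simp <;> omega
    · intro b hb
      simp only [mem_filter, mem_product, mem_range] at hb
      simp
    · intro a ha
      simp only [mem_sigma, mem_range] at ha
      simp
  rw [hprod, hadd, ← Finset.sum_filter_add_sum_filter_not (range p ×ˢ range p)
    (fun ij => ij.1 + ij.2 < p)]
  have : (range p ×ˢ range p).filter (fun ij => ¬ ij.1 + ij.2 < p)
      = (range p ×ˢ range p).filter (fun ij => p ≤ ij.1 + ij.2) := by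
    apply Finset.filter_congr; intro ij _; simp [not_lt]
  rw [this]; ring

lemma truncExp_hom_mem (p : ℕ) (hfac : IsUnit ((Nat.factorial (p - 1) : R)))
    {A : Ideal R} {x y : R} (hx : x ∈ A) (hy : y ∈ A) :
    truncExp p x * truncExp p y - truncExp p (x + y) ∈ A ^ p := by
  rw [truncExp_mul_sub p hfac]
  refine Ideal.sum_mem _ fun ij hij => ?_
  simp only [mem_filter, mem_product, mem_range] at hij
  refine Ideal.mul_mem_left _ _ ?_
  have h1 : x ^ ij.1 * y ^ ij.2 ∈ A ^ (ij.1 + ij.2) := by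
    rw [pow_add]
    exact Ideal.mul_mem_mul (Ideal.pow_mem_pow hx _) (Ideal.pow_mem_pow hy _)
  exact Ideal.pow_le_pow_right hij.2 h1

lemma truncExp_tail_mem {p : ℕ} (hp : 2 ≤ p) {A : Ideal R} {m : ℕ} {x : R}
    (hx : x ∈ A ^ m) : truncExp p x - 1 - x ∈ A ^ (2 * m) := by
  have hsplit : truncExp p x
      = (∑ j ∈ range 2, Ring.inverse ((j.factorial : R)) * x ^ j)
        + ∑ j ∈ Finset.Ico 2 p, Ring.inverse ((j.factorial : R)) * x ^ j := by
    rw [truncExp, Finset.range_eq_Ico, Finset.range_eq_Ico, ← Finset.sum_Ico_consecutive _ (by omega : 0 ≤ 2) hp]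
  have h2 : (∑ j ∈ range 2, Ring.inverse ((j.factorial : R)) * x ^ j) = 1 + x := by
    simp [Finset.sum_range_succ, Nat.factorial]
  rw [hsplit, h2]
  have : 1 + x + (∑ j ∈ Finset.Ico 2 p, Ring.inverse ((j.factorial : R)) * x ^ j) - 1 - x
      = ∑ j ∈ Finset.Ico 2 p, Ring.inverse ((j.factorial : R)) * x ^ j := by ring
  rw [this]
  refine Ideal.sum_mem _ fun j hj => ?_
  have hj2 : 2 ≤ j := (Finset.mem_Ico.mp hj).1
  refine Ideal.mul_mem_left _ _ ?_
  have h1 : x ^ j ∈ A ^ (m * j) := by rw [pow_mul]; exact Ideal.pow_mem_pow hx _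
  exact Ideal.pow_le_pow_right (by nlinarith) h1

lemma truncExp_sub_one_mem {p : ℕ} (hp : 1 ≤ p) {A : Ideal R} {m : ℕ} {x : R}
    (hx : x ∈ A ^ m) : truncExp p x - 1 ∈ A ^ m := by
  have hsplit : truncExp p x
      = (∑ j ∈ range 1, Ring.inverse ((j.factorial : R)) * x ^ j)
        + ∑ j ∈ Finset.Ico 1 p, Ring.inverse ((j.factorial : R)) * x ^ j := by
    rw [truncExp, Finset.range_eq_Ico, Finset.range_eq_Ico, ← Finset.sum_Ico_consecutive _ (by omega : 0 ≤ 1) hp]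
  have h2 : (∑ j ∈ range 1, Ring.inverse ((j.factorial : R)) * x ^ j) = 1 := by
    simp [Nat.factorial]
  rw [hsplit, h2, add_sub_cancel_left]
  refine Ideal.sum_mem _ fun j hj => ?_
  have hj1 : 1 ≤ j := (Finset.mem_Ico.mp hj).1
  refine Ideal.mul_mem_left _ _ ?_
  have h1 : x ^ j ∈ A ^ (m * j) := by rw [pow_mul]; exact Ideal.pow_mem_pow hx _
  exact Ideal.pow_le_pow_right (by nlinarith) h1

lemma truncExp_injective {p : ℕ} (hp : 2 ≤ p) {A : Ideal R} {x : R} (hx : x ∈ A)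
    (h : truncExp p x - 1 ∈ A ^ p) : x ∈ A ^ p := by
  have key : ∀ m, x ∈ A ^ (min (2 ^ m) p) := by
    intro m
    induction m with
    | zero => simpa [min_eq_left (by omega : 1 ≤ p)] using hx
    | succ n ih =>
      have h2 : truncExp p x - 1 - x ∈ A ^ (2 * min (2 ^ n) p) := truncExp_tail_mem hp ih
      have hx' : x ∈ A ^ (min (2 * min (2 ^ n) p) p) := by
        have hxe : x = (truncExp p x - 1) - (truncExp p x - 1 - x) := by ring
        rw [hxe]
        exact Submodule.sub_mem _ (Ideal.pow_le_pow_right (min_le_right _ _) h)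
          (Ideal.pow_le_pow_right (min_le_left _ _) h2)
      have hle : min (2 ^ (n + 1)) p ≤ min (2 * min (2 ^ n) p) p := by
        have := Nat.one_le_two_pow (n := n)
        rw [pow_succ]
        omega
      exact Ideal.pow_le_pow_right hle hx'
  have := key p
  rwa [min_eq_right (Nat.lt_two_pow_self (n := p)).le] at this

lemma truncExp_surjective {p : ℕ} (hp : 2 ≤ p) (hfac : IsUnit ((Nat.factorial (p - 1) : R)))
    {A : Ideal R} (hA : ∀ z ∈ A, IsUnit (1 + z)) {u : R} (hu : u - 1 ∈ A) :
    ∃ x ∈ A, u - truncExp p x ∈ A ^ p := by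
  have key : ∀ m, ∃ x ∈ A, u - truncExp p x ∈ A ^ (min (2 ^ m) p) := by
    intro m
    induction m with
    | zero =>
      refine ⟨u - 1, hu, ?_⟩
      have h2 : truncExp p (u - 1) - 1 - (u - 1) ∈ A ^ (2 * 1) :=
        truncExp_tail_mem hp (by simpa using hu)
      have he : u - truncExp p (u - 1) = -(truncExp p (u - 1) - 1 - (u - 1)) := by ring
      rw [he]
      exact Submodule.neg_mem _ (Ideal.pow_le_pow_right (by omega) h2)
    | succ n ih =>
      obtain ⟨x, hxA, hδ⟩ := ih
      set a := min (2 ^ n) p with ha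
      have ha1 : 1 ≤ a := by
        have := Nat.one_le_two_pow (n := n); omega
      have he1 : truncExp p x - 1 ∈ A := by
        simpa using truncExp_sub_one_mem (p := p) (m := 1) (A := A) (by omega) (by simpa using hxA)
      have heu : IsUnit (truncExp p x) := by
        have := hA _ he1
        simpa using this
      obtain ⟨e, he⟩ := heu
      set δ := u - truncExp p x with hδdef
      set δ' := (↑e⁻¹ : R) * δ with hδ'def
      have hδ'A : δ' ∈ A ^ a := Ideal.mul_mem_left _ _ hδ
      have hδ'A1 : δ' ∈ A := Ideal.pow_le_self (by omega) hδ'A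
      refine ⟨x + δ', Submodule.add_mem _ hxA hδ'A1, ?_⟩
      have t1 : truncExp p x * truncExp p δ' - truncExp p (x + δ') ∈ A ^ p :=
        truncExp_hom_mem p hfac hxA hδ'A1
      have t2 : truncExp p δ' - 1 - δ' ∈ A ^ (2 * a) := truncExp_tail_mem hp hδ'A
      have hz : u - truncExp p x - truncExp p x * δ' = 0 := by
        rw [hδ'def, ← he, ← mul_assoc, ← Units.val_mul, mul_inv_cancel, Units.val_one, one_mul,
          hδdef, he]
        ring
      have main : u - truncExp p (x + δ') =
          (truncExp p x * truncExp p δ' - truncExp p (x + δ'))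
            - truncExp p x * (truncExp p δ' - 1 - δ')
            + (u - truncExp p x - truncExp p x * δ') := by ring
      rw [main, hz, add_zero]
      have hle : min (2 ^ (n + 1)) p ≤ min (2 * a) p := by
        have := Nat.one_le_two_pow (n := n)
        rw [pow_succ]; omega
      refine Ideal.pow_le_pow_right hle ?_
      exact Submodule.sub_mem _ (Ideal.pow_le_pow_right (min_le_right _ _) t1)
        (Ideal.pow_le_pow_right (min_le_left _ _) (Ideal.mul_mem_left _ _ t2))
  obtain ⟨x, hxA, hx⟩ := key p
  exact ⟨x, hxA, by rwa [min_eq_right (Nat.lt_two_pow_self (n := p)).le] at hx⟩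

end TruncExpHelpers

/-- if `I` is contained in the Jacobson radical and `(p-1)!` is invertible,
then (i) every element of `1 + I^k` is a unit; (ii) for every `j ≥ 1` the units congruent
to `1` mod `I^j` form a subgroup `U_j` of `Rˣ`; and (iii) `exp_p` induces a group
isomorphism `I^k/I^{pk} ≃ U_k/U_{pk}`. -/


theorem truncExp_induces_quotient_group_iso (p : ℕ) (hp : p.Prime) (R : Type*) [CommRing R]
    (hfac : IsUnit ((Nat.factorial (p - 1) : R))) (I : Ideal R)
    (hI : I ≤ Ideal.jacobson ⊥) (k : ℕ) (hk : 1 ≤ k) :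
    (∀ x ∈ I ^ k, IsUnit (1 + x)) ∧
    (∀ j : ℕ, 1 ≤ j → ∃ U : Subgroup Rˣ, ∀ u : Rˣ, u ∈ U ↔ (u : R) - 1 ∈ I ^ j) ∧
    (∀ (Uk Upk : Subgroup Rˣ),
      (∀ u : Rˣ, u ∈ Uk ↔ (u : R) - 1 ∈ I ^ k) →
      (∀ u : Rˣ, u ∈ Upk ↔ (u : R) - 1 ∈ I ^ (p * k)) →
      ∃ e : Multiplicative
            (↥(I ^ k) ⧸ Submodule.comap (I ^ k).subtype (I ^ (p * k))) ≃*
          (↥Uk ⧸ Upk.subgroupOf Uk),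
        ∀ (x : ↥(I ^ k)) (u : ↥Uk), ((u : Rˣ) : R) = truncExp p (x : R) →
          e (Multiplicative.ofAdd (Submodule.Quotient.mk x)) = QuotientGroup.mk u) := by
  have hp2 : 2 ≤ p := hp.two_le
  have part1 : ∀ x ∈ I ^ k, IsUnit (1 + x) := by
    intro x hx
    have hxJ : x ∈ Ideal.jacobson ⊥ := hI (Ideal.pow_le_self (by omega) hx)
    have := Ideal.mem_jacobson_bot.mp hxJ 1
    simpa [add_comm] using this
  have part2 : ∀ j : ℕ, 1 ≤ j → ∃ U : Subgroup Rˣ, ∀ u : Rˣ, u ∈ U ↔ (u : R) - 1 ∈ I ^ j := by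
    intro j _
    refine ⟨{ carrier := {u : Rˣ | (u : R) - 1 ∈ I ^ j}
              one_mem' := by simp
              mul_mem' := ?_
              inv_mem' := ?_ }, fun u => Iff.rfl⟩
    · intro a b ha hb
      simp only [Set.mem_setOf_eq, Units.val_mul] at *
      have h : (a : R) * b - 1 = ((a : R) - 1) * b + ((b : R) - 1) := by ring
      rw [h]
      exact Submodule.add_mem _ (Ideal.mul_mem_right _ _ ha) hb
    · intro a ha
      simp only [Set.mem_setOf_eq] at *
      have h1 : ((a⁻¹ : Rˣ) : R) * ((a : Rˣ) : R) = 1 := by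
        rw [← Units.val_mul, inv_mul_cancel, Units.val_one]
      have h : ((a⁻¹ : Rˣ) : R) - 1 = -(((a : R) - 1) * ((a⁻¹ : Rˣ) : R)) := by
        linear_combination h1
      rw [h]
      exact Submodule.neg_mem _ (Ideal.mul_mem_right _ _ ha)
  refine ⟨part1, part2, ?_⟩
  intro Uk Upk hUk hUpk
  have hpk : I ^ (p * k) = (I ^ k) ^ p := by rw [← pow_mul, mul_comm]
  have hsub1 : ∀ x : R, x ∈ I ^ k → truncExp p x - 1 ∈ I ^ k := by
    intro x hx
    simpa using truncExp_sub_one_mem (p := p) (m := 1) (A := I ^ k) (by omega)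
      (by simpa using hx)
  have hisUnit : ∀ x : R, x ∈ I ^ k → IsUnit (truncExp p x) := by
    intro x hx
    have := part1 _ (hsub1 x hx)
    simpa using this
  set G := ↥Uk ⧸ Upk.subgroupOf Uk with hG
  let φ : ↥(I ^ k) → ↥Uk := fun x =>
    ⟨(hisUnit x.1 x.2).unit, (hUk _).mpr (by rw [IsUnit.unit_spec]; exact hsub1 x.1 x.2)⟩
  have φval : ∀ x : ↥(I ^ k), ((φ x : Rˣ) : R) = truncExp p x.1 := fun x =>
    IsUnit.unit_spec _
  have mkeq : ∀ a b : ↥Uk, ((b : Rˣ) : R) - ((a : Rˣ) : R) ∈ I ^ (p * k) →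
      (QuotientGroup.mk a : G) = QuotientGroup.mk b := by
    intro a b hab
    rw [QuotientGroup.eq, Subgroup.mem_subgroupOf, hUpk]
    have h1 : (((a : Rˣ)⁻¹ : Rˣ) : R) * ((a : Rˣ) : R) = 1 := by
      rw [← Units.val_mul, inv_mul_cancel, Units.val_one]
    have hval : ((((a⁻¹ * b : ↥Uk) : Rˣ)) : R) - 1
        = (((a : Rˣ)⁻¹ : Rˣ) : R) * (((b : Rˣ) : R) - ((a : Rˣ) : R)) := by
      push_cast
      linear_combination h1
    rw [hval]
    exact Ideal.mul_mem_left _ _ hab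
  let F : ↥(I ^ k) →+ Additive G :=
    { toFun := fun x => Additive.ofMul (QuotientGroup.mk (φ x) : G)
      map_zero' := by
        have : (QuotientGroup.mk (φ 0) : G) = QuotientGroup.mk (1 : ↥Uk) := by
          refine (mkeq _ _ ?_).symm
          have h0 : ((φ 0 : Rˣ) : R) - 1 ∈ (I ^ k) ^ p := by
            rw [φval]
            exact truncExp_sub_one_mem (by omega) (Submodule.zero_mem _)
          simpa [hpk] using h0
        simp only [this, QuotientGroup.mk_one]
        rfl
      map_add' := by
        intro x y
        have : (QuotientGroup.mk (φ (x + y)) : G) = QuotientGroup.mk (φ x * φ y) := by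
          refine mkeq _ _ ?_
          have hd : ((φ x * φ y : ↥Uk) : Rˣ) = (φ x : Rˣ) * (φ y : Rˣ) := rfl
          rw [hpk]
          have : (((φ x * φ y : ↥Uk) : Rˣ) : R) - (((φ (x + y) : ↥Uk) : Rˣ) : R)
              = truncExp p x.1 * truncExp p y.1 - truncExp p (x.1 + y.1) := by
            rw [hd, Units.val_mul, φval, φval, φval]
            rfl
          rw [this]
          exact truncExp_hom_mem p hfac x.2 y.2
        simp only [this]
        rfl }
  have hker : (Submodule.comap (I ^ k).subtype (I ^ (p * k))).toAddSubgroup ≤ F.ker := by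
    intro x hx
    have hx' : x.1 ∈ (I ^ k) ^ p := by
      rw [← hpk]
      exact hx
    have h1 : ((φ x : Rˣ) : R) - 1 ∈ I ^ (p * k) := by
      rw [φval, hpk]
      exact truncExp_sub_one_mem (by omega) hx'
    have : (QuotientGroup.mk (φ x) : G) = 1 := by
      rw [QuotientGroup.eq_one_iff, Subgroup.mem_subgroupOf, hUpk]
      exact h1
    show Additive.ofMul (QuotientGroup.mk (φ x) : G) = 0
    rw [this]
    rfl
  let F0 : (↥(I ^ k) ⧸ Submodule.comap (I ^ k).subtype (I ^ (p * k))) →+ Additive G :=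
    QuotientAddGroup.lift (M := Additive G) _ F hker
  let f : Multiplicative (↥(I ^ k) ⧸ Submodule.comap (I ^ k).subtype (I ^ (p * k))) →* G :=
    AddMonoidHom.toMultiplicativeLeft F0
  have fmk : ∀ x : ↥(I ^ k),
      f (Multiplicative.ofAdd (Submodule.Quotient.mk x)) = QuotientGroup.mk (φ x) := fun x => rfl
  have hinj : Function.Injective f := by
    rw [injective_iff_map_eq_one]
    intro a ha
    obtain ⟨x, hx⟩ := Submodule.Quotient.mk_surjective _ (Multiplicative.toAdd a)
    have hax : a = Multiplicative.ofAdd (Submodule.Quotient.mk x) := by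
      rw [hx]
      rfl
    rw [hax, fmk] at ha
    rw [QuotientGroup.eq_one_iff, Subgroup.mem_subgroupOf, hUpk, φval, hpk] at ha
    have hxp : x.1 ∈ (I ^ k) ^ p := truncExp_injective hp2 x.2 ha
    rw [hax]
    have : (Submodule.Quotient.mk x : ↥(I ^ k) ⧸ Submodule.comap (I ^ k).subtype (I ^ (p * k))) = 0 := by
      rw [Submodule.Quotient.mk_eq_zero]
      show x.1 ∈ I ^ (p * k)
      rw [hpk]
      exact hxp
    rw [this]
    rfl
  have hsurj : Function.Surjective f := by
    intro b
    obtain ⟨u, hu⟩ := QuotientGroup.mk_surjective b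
    have hu1 : ((u : Rˣ) : R) - 1 ∈ I ^ k := (hUk _).mp u.2
    obtain ⟨x, hxA, hxmem⟩ := truncExp_surjective hp2 hfac part1 hu1
    refine ⟨Multiplicative.ofAdd (Submodule.Quotient.mk ⟨x, hxA⟩), ?_⟩
    rw [fmk, ← hu]
    refine mkeq _ _ ?_
    rw [φval, hpk]
    exact hxmem
  refine ⟨MulEquiv.ofBijective f ⟨hinj, hsurj⟩, ?_⟩
  intro x u huval
  have : φ x = u := by
    apply Subtype.ext
    apply Units.ext
    rw [φval, huval]
  show f (Multiplicative.ofAdd (Submodule.Quotient.mk x)) = QuotientGroup.mk u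
  rw [fmk, this]
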